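/- Let G be a functional extraction grammar in which every nonterminal is useful. Then for every nonterminal A of G there exists a set 𝐱_A ⊆ Γ_X of variable operations such that for every ref-word r with A ⇒* r, the set of variable operations occurring in r is exactly 𝐱_A. -/
import Mathlib


/-- A variable operation: `(x, true)` is `⊢x` (open), `(x, false)` is `⊣x` (close). -/
abbrev VarOp (X : Type) : Type := X × Bool

/-- A ref-word: a word over the extended alphabet `Σ ∪ Γ_X`. -/
abbrev RefWord (T X : Type) : Type := List (T ⊕ VarOp X)

/-- The morphism `clr` erasing variable operations and fixing letters of `Σ`. -/
def clr {T X : Type} (r : RefWord T X) : List T :=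
  r.filterMap (fun a => match a with | Sum.inl t => some t | Sum.inr _ => none)

/-- A ref-word is valid for `X`: each `⊢x` and `⊣x` occurs exactly once, `⊢x` before `⊣x`. -/
def ValidRef {T X : Type} (r : RefWord T X) : Prop :=
  ∀ x : X, ∃ u v w : RefWord T X,
    r = u ++ Sum.inr (x, true) :: (v ++ Sum.inr (x, false) :: w) ∧
    ∀ b : Bool, Sum.inr (x, b) ∉ u ∧ Sum.inr (x, b) ∉ v ∧ Sum.inr (x, b) ∉ w

/-- `μ` is the `(X,d)`-mapping `μ^r` induced by the ref-word `r`. -/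
def MappingOf {T X : Type} (r : RefWord T X) (μ : X → ℕ × ℕ) : Prop :=
  ∀ x : X, ∃ u v w : RefWord T X,
    r = u ++ Sum.inr (x, true) :: (v ++ Sum.inr (x, false) :: w) ∧
    μ x = ((clr u).length + 1, (clr u).length + 1 + (clr v).length)

/-- The spanner defined by an extraction grammar (a CFG over `Σ ∪ Γ_X`). -/
def spanner {T X : Type} (G : ContextFreeGrammar (T ⊕ VarOp X)) (d : List T) :
    Set (X → ℕ × ℕ) :=
  {μ | ∃ r : RefWord T X, r ∈ G.language ∧ ValidRef r ∧ clr r = d ∧ MappingOf r μ}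

/-- A spanner is context-free if it is definable by an extraction grammar. -/
def IsCFSpanner {T X : Type} (S : List T → Set (X → ℕ × ℕ)) : Prop :=
  ∃ G : ContextFreeGrammar.{0} (T ⊕ VarOp X), ∀ d : List T, S d = spanner G d

/-- A context-free derivation from a concatenation splits into derivations from the parts. -/
lemma derives_split {T : Type} {g : ContextFreeGrammar.{0} T} :
    ∀ {s w : List (Symbol T g.NT)}, g.Derives s w →
    ∀ p q : List (Symbol T g.NT), s = p ++ q →
    ∃ w₁ w₂, w = w₁ ++ w₂ ∧ g.Derives p w₁ ∧ g.Derives q w₂ := by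
  intro s w h
  induction h using Relation.ReflTransGen.head_induction_on with
  | refl =>
    intro p q hpq
    exact ⟨p, q, hpq, ContextFreeGrammar.Derives.refl p, ContextFreeGrammar.Derives.refl q⟩
  | head hpc hcw ih =>
    intro p q hpq
    obtain ⟨r, hr, hrw⟩ := hpc
    obtain ⟨x, y, hxy, hc⟩ := hrw.exists_parts
    subst hc
    rw [hpq, List.append_assoc] at hxy
    rcases List.append_eq_append_iff.mp hxy with ⟨a', hx, hq⟩ | ⟨c', hp, hd⟩
    · -- x = p ++ a', q = a' ++ [nt] ++ y : nonterminal inside q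
      obtain ⟨w₁, w₂, hw, hd1, hd2⟩ := ih p (a' ++ r.output ++ y) (by rw [hx]; simp)
      refine ⟨w₁, w₂, hw, hd1, ?_⟩
      refine ContextFreeGrammar.Produces.trans_derives ⟨r, hr, ?_⟩ hd2
      have hq' : q = a' ++ [Symbol.nonterminal r.input] ++ y := by rw [hq]; simp
      rw [hq']
      exact ContextFreeRule.rewrites_of_exists_parts r a' y
    · rcases c' with _ | ⟨z, c''⟩
      · -- p = x, q = [nt] ++ y
        obtain ⟨w₁, w₂, hw, hd1, hd2⟩ := ih p (r.output ++ y) (by rw [hp]; simp)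
        refine ⟨w₁, w₂, hw, hd1, ?_⟩
        refine ContextFreeGrammar.Produces.trans_derives ⟨r, hr, ?_⟩ hd2
        have hq' : q = [] ++ [Symbol.nonterminal r.input] ++ y := by
          simpa using hd.symm
        rw [hq']
        exact ContextFreeRule.rewrites_of_exists_parts r [] y
      · -- p = x ++ nt :: c'', y = c'' ++ q : nonterminal inside p
        obtain ⟨hz, hy⟩ : Symbol.nonterminal r.input = z ∧ y = c'' ++ q := by
          constructor
          · exact (List.cons_eq_cons.mp (by simpa using hd)).1
          · exact (List.cons_eq_cons.mp (by simpa using hd)).2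
        subst hy
        obtain ⟨w₁, w₂, hw, hd1, hd2⟩ := ih (x ++ r.output ++ c'') q (by simp)
        refine ⟨w₁, w₂, hw, ?_, hd2⟩
        refine ContextFreeGrammar.Produces.trans_derives ⟨r, hr, ?_⟩ hd1
        have hp' : p = x ++ [Symbol.nonterminal r.input] ++ c'' := by
          rw [hp, hz]; simp
        rw [hp']
        exact ContextFreeRule.rewrites_of_exists_parts r x c''

/-- In a valid ref-word, each variable operation occurs exactly once. -/
lemma validRef_count {T X : Type} [DecidableEq (T ⊕ VarOp X)] {r : RefWord T X}
    (h : ValidRef r) (x : X) (b : Bool) :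
    r.count (Sum.inr (x, b) : T ⊕ VarOp X) = 1 := by
  obtain ⟨u, v, w, hru, hnot⟩ := h x
  subst hru
  have hu := List.count_eq_zero.mpr (hnot b).1
  have hv := List.count_eq_zero.mpr (hnot b).2.1
  have hw := List.count_eq_zero.mpr (hnot b).2.2
  cases b <;> simp [List.count_append, List.count_cons, hu, hv, hw]

/-- If an element occurs exactly once in `l₁ ++ l₂ ++ l₃`, membership in the middle part is
equivalent to absence from the outer parts. -/
lemma count_one_split {α : Type} [DecidableEq α] {a : α} {l₁ l₂ l₃ : List α}
    (h : l₁.count a + l₂.count a + l₃.count a = 1) :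
    a ∈ l₂ ↔ a ∉ l₁ ∧ a ∉ l₃ := by
  rw [← List.count_pos_iff, ← List.count_eq_zero, ← List.count_eq_zero]
  omega

/-- In a functional extraction grammar all of whose nonterminals are useful, each nonterminal `A`
determines a fixed set `𝐱_A` of variable operations: every terminal ref-word derivable from `A`
contains exactly the variable operations in `𝐱_A`. -/
theorem stmt12 (T X : Type) (G : ContextFreeGrammar.{0} (T ⊕ VarOp X))
    (hfunc : ∀ r : RefWord T X, r ∈ G.language → ValidRef r)
    (huseful : ∀ A : G.NT, ∃ (α β : List (Symbol (T ⊕ VarOp X) G.NT)) (w : RefWord T X),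
        G.Derives [Symbol.nonterminal G.initial] (α ++ Symbol.nonterminal A :: β) ∧
        G.Derives (α ++ Symbol.nonterminal A :: β) (w.map Symbol.terminal)) :
    ∀ A : G.NT, ∃ xA : Set (VarOp X),
      ∀ r : RefWord T X,
        G.Derives [Symbol.nonterminal A] (r.map Symbol.terminal) →
        {γ : VarOp X | Sum.inr γ ∈ r} = xA := by
  letI : DecidableEq (T ⊕ VarOp X) := Classical.decEq _
  intro A
  obtain ⟨α, β, w, hctx, hterm⟩ := huseful A
  -- split the derivation of the full terminal word
  obtain ⟨s₁, s₂, hs, hdα, hdrest⟩ := derives_split hterm α (Symbol.nonterminal A :: β) rfl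
  obtain ⟨t₁, t₂, ht, hdA, hdβ⟩ :=
    derives_split hdrest [Symbol.nonterminal A] β rfl
  rw [ht] at hs
  obtain ⟨w₁, rest, hw, hw₁, hrest⟩ := List.map_eq_append_iff.mp hs
  obtain ⟨wm, w₃, hwrest, hwm, hw₃⟩ := List.map_eq_append_iff.mp hrest
  refine ⟨{γ | Sum.inr γ ∉ w₁ ∧ Sum.inr γ ∉ w₃}, ?_⟩
  intro r hr
  -- w₁ ++ r ++ w₃ is in the language
  have hin : (w₁ ++ r ++ w₃) ∈ G.language := by
    rw [ContextFreeGrammar.mem_language_iff]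
    refine hctx.trans ?_
    have h1 : G.Derives (α ++ Symbol.nonterminal A :: β)
        (List.map Symbol.terminal w₁ ++ Symbol.nonterminal A :: β) := by
      rw [hw₁]
      exact hdα.append_right _
    have h2 : G.Derives (List.map Symbol.terminal w₁ ++ Symbol.nonterminal A :: β)
        (List.map Symbol.terminal w₁ ++ (List.map Symbol.terminal r ++ β)) :=
      (hr.append_right β).append_left _
    have h3 : G.Derives (List.map Symbol.terminal w₁ ++ (List.map Symbol.terminal r ++ β))
        (List.map Symbol.terminal w₁ ++ (List.map Symbol.terminal r ++
          List.map Symbol.terminal w₃)) := by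
      rw [hw₃]
      exact (hdβ.append_left _).append_left _
    refine (h1.trans (h2.trans h3)).trans ?_
    rw [List.map_append, List.map_append, List.append_assoc]
  have hvalid := hfunc _ hin
  ext ⟨x, b⟩
  have hc := validRef_count hvalid x b
  rw [List.count_append, List.count_append] at hc
  simpa [Set.mem_setOf_eq] using count_one_split hc
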